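/- Let H be self-adjoint, β > 0, σ_β the Gibbs state, and L_j a matrix with σ_β L_j σ_β⁻¹ = e^{−ω} L_j for some real ω with L_j† ≠ L_j. Define L̃₁ = e^{−ω/4} L_j + e^{ω/4} L_j† and L̃₂ = i(−e^{−ω/4} L_j + e^{ω/4} L_j†). Then both L̃₁ and L̃₂ satisfy the KMS condition Δ_{σ_β}^{−1/2}(L̃) = L̃†, and for every matrix X one has L̃₁† X L̃₁ + L̃₂† X L̃₂ = 2 e^{−ω/2} L_j† X L_j + 2 e^{ω/2} L_j X L_j†. -/

import Mathlib

open Matrix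
open scoped ComplexOrder


set_option maxHeartbeats 1000000 in
lemma half_step {N : ℕ} (R L : Matrix (Fin N) (Fin N) ℂ)
    (hR : R.PosDef) (c : ℝ) (hc : 0 < c)
    (h : R * R * L = ((c * c : ℝ) : ℂ) • (L * (R * R))) :
    R * L = (c : ℂ) • (L * R) := by
  classical
  have hH := hR.1
  set U : Matrix (Fin N) (Fin N) ℂ := (hH.eigenvectorUnitary : Matrix (Fin N) (Fin N) ℂ) with hU
  have hUU : Uᴴ * U = 1 := by
    simpa [hU, star_eq_conjTranspose] using
      (Matrix.mem_unitaryGroup_iff'.mp hH.eigenvectorUnitary.2)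
  have hUU' : U * Uᴴ = 1 := by
    simpa [hU, star_eq_conjTranspose] using
      (Matrix.mem_unitaryGroup_iff.mp hH.eigenvectorUnitary.2)
  have hconj : ∀ A : Matrix (Fin N) (Fin N) ℂ, Uᴴ * (U * A * Uᴴ) * U = A := by
    intro A
    calc Uᴴ * (U * A * Uᴴ) * U = (Uᴴ * U) * A * (Uᴴ * U) := by noncomm_ring
      _ = A := by rw [hUU]; simp
  have hmerge : ∀ A B : Matrix (Fin N) (Fin N) ℂ,
      (U * A * Uᴴ) * (U * B * Uᴴ) = U * (A * B) * Uᴴ := by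
    intro A B
    calc (U * A * Uᴴ) * (U * B * Uᴴ) = U * (A * ((Uᴴ * U) * B)) * Uᴴ := by noncomm_ring
      _ = U * (A * B) * Uᴴ := by rw [hUU]; noncomm_ring
  set e : Fin N → ℝ := hH.eigenvalues with he
  set D : Matrix (Fin N) (Fin N) ℂ := diagonal (fun i => (e i : ℂ)) with hD
  have hspec : R = U * D * Uᴴ := by
    have := hH.spectral_theorem
    simpa [hU, hD, star_eq_conjTranspose, Function.comp_def] using this
  set M : Matrix (Fin N) (Fin N) ℂ := Uᴴ * L * U with hM
  have hLM : L = U * M * Uᴴ := by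
    rw [hM]
    calc L = (U * Uᴴ) * L * (U * Uᴴ) := by rw [hUU']; simp
      _ = U * (Uᴴ * L * U) * Uᴴ := by noncomm_ring
  have key : D * M = (c : ℂ) • (M * D) := by
    have h2 : D * D * M = ((c * c : ℝ) : ℂ) • (M * (D * D)) := by
      have h' := h
      rw [hspec, hLM] at h'
      have e1 : (U*D*Uᴴ)*(U*D*Uᴴ)*(U*M*Uᴴ) = U*(D*D*M)*Uᴴ := by
        rw [hmerge D D, hmerge (D*D) M]
      have e2 : (U*M*Uᴴ)*((U*D*Uᴴ)*(U*D*Uᴴ)) = U*(M*(D*D))*Uᴴ := by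
        rw [hmerge D D, hmerge M (D*D)]
      rw [e1, e2] at h'
      have h'' := congrArg (fun A => Uᴴ * A * U) h'
      rw [Matrix.mul_smul, Matrix.smul_mul, hconj, hconj] at h''
      exact h''
    ext i j
    have h2ij := congrFun (congrFun h2 i) j
    have hDD : D * D = diagonal (fun i => ((e i : ℂ) * (e i : ℂ))) := by
      rw [hD, diagonal_mul_diagonal]
    rw [hDD] at h2ij
    simp only [diagonal_mul, mul_diagonal, Matrix.smul_apply, smul_eq_mul] at h2ij
    simp only [hD, diagonal_mul, mul_diagonal, Matrix.smul_apply, smul_eq_mul]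
    by_cases hMij : M i j = 0
    · simp [hMij]
    · have hei : (e i : ℂ) * (e i : ℂ) = ((c*c : ℝ):ℂ) * ((e j : ℂ) * (e j : ℂ)) := by
        have hh : ((e i : ℂ) * (e i : ℂ)) * M i j
            = (((c*c : ℝ):ℂ) * ((e j : ℂ) * (e j : ℂ))) * M i j := by
          linear_combination h2ij
        exact mul_right_cancel₀ hMij hh
      have heiR : e i * e i = (c * c) * (e j * e j) := by exact_mod_cast hei
      have hpos_i := hR.eigenvalues_pos i
      have hpos_j := hR.eigenvalues_pos j
      have heq : e i = c * e j := by
        nlinarith [hpos_i, hpos_j, mul_pos hc hpos_j]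
      rw [heq]
      push_cast
      ring
  calc R * L = (U * D * Uᴴ) * (U * M * Uᴴ) := by rw [← hspec, ← hLM]
    _ = U * (D * M) * Uᴴ := hmerge D M
    _ = (c : ℂ) • (U * (M * D) * Uᴴ) := by
        rw [key, Matrix.mul_smul, Matrix.smul_mul]
    _ = (c : ℂ) • ((U * M * Uᴴ) * (U * D * Uᴴ)) := by rw [hmerge]
    _ = (c : ℂ) • (L * R) := by rw [← hspec, ← hLM]

/-- If `σ_β L σ_β⁻¹ = e^{−ω} L`, then `L̃₁ = e^{−ω/4}L + e^{ω/4}Lᴴ` and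
`L̃₂ = i(−e^{−ω/4}L + e^{ω/4}Lᴴ)` satisfy the KMS condition
`σ_β^{−1/2} L̃ σ_β^{1/2} = L̃ᴴ`, and for all `X`,
`L̃₁ᴴ X L̃₁ + L̃₂ᴴ X L̃₂ = 2e^{−ω/2} Lᴴ X L + 2e^{ω/2} L X Lᴴ`. -/
theorem stmt_8 {N : ℕ} (β : ℝ) (hβ : 0 < β)
    (σβ R : Matrix (Fin N) (Fin N) ℂ)
    (hσβ : σβ.PosDef) (hR : R.PosDef) (hR2 : R * R = σβ)
    (L : Matrix (Fin N) (Fin N) ℂ) (ω : ℝ)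
    (hmod : σβ * L * σβ⁻¹ = (Real.exp (-ω) : ℂ) • L)
    (hLnsa : Lᴴ ≠ L)
    (L1 L2 : Matrix (Fin N) (Fin N) ℂ)
    (hL1 : L1 = (Real.exp (-ω / 4) : ℂ) • L + (Real.exp (ω / 4) : ℂ) • Lᴴ)
    (hL2 : L2 = Complex.I •
      (-((Real.exp (-ω / 4) : ℂ) • L) + (Real.exp (ω / 4) : ℂ) • Lᴴ)) :
    R⁻¹ * L1 * R = L1ᴴ ∧ R⁻¹ * L2 * R = L2ᴴ ∧
      ∀ X : Matrix (Fin N) (Fin N) ℂ,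
        L1ᴴ * X * L1 + L2ᴴ * X * L2 =
          (2 * Real.exp (-ω / 2) : ℂ) • (Lᴴ * X * L) +
            (2 * Real.exp (ω / 2) : ℂ) • (L * X * Lᴴ) := by
  have hdet : IsUnit σβ.det := isUnit_iff_ne_zero.mpr hσβ.det_pos.ne'
  have hσL : σβ * L = (Real.exp (-ω) : ℂ) • (L * σβ) := by
    have h0 := congrArg (fun A => A * σβ) hmod
    rw [Matrix.mul_assoc (σβ * L), Matrix.nonsing_inv_mul σβ hdet, Matrix.mul_one,
      Matrix.smul_mul] at h0
    exact h0
  have hh : R * R * L = ((Real.exp (-ω/2) * Real.exp (-ω/2) : ℝ) : ℂ) • (L * (R * R)) := by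
    rw [hR2, ← Real.exp_add, show (-ω/2 + -ω/2 : ℝ) = -ω by ring]
    exact hσL
  have hhalf := half_step R L hR (Real.exp (-ω/2)) (Real.exp_pos _) hh
  have hRdet : IsUnit R.det := isUnit_iff_ne_zero.mpr hR.det_pos.ne'
  -- symbolic scalars
  set a : ℂ := (Real.exp (-ω/4) : ℂ) with ha
  set b : ℂ := (Real.exp (ω/4) : ℂ) with hb
  set c : ℂ := (Real.exp (-ω/2) : ℂ) with hc
  set d : ℂ := (Real.exp (ω/2) : ℂ) with hd
  have hsa : star a = a := by rw [ha]; exact Complex.conj_ofReal _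
  have hsb : star b = b := by rw [hb]; exact Complex.conj_ofReal _
  have hexp : ∀ x y z : ℝ, x + y = z →
      (Real.exp x : ℂ) * (Real.exp y : ℂ) = (Real.exp z : ℂ) := by
    intro x y z hxyz
    norm_cast
    rw [← Real.exp_add, hxyz]
  have hdc : d * c = 1 := by
    rw [hd, hc, hexp (ω/2) (-ω/2) 0 (by ring), Real.exp_zero, Complex.ofReal_one]
  have hs1 : a * d = b := by rw [ha, hd, hb]; exact hexp _ _ _ (by ring)
  have hs2 : b * c = a := by rw [hb, hc, ha]; exact hexp _ _ _ (by ring)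
  have haa : a * a = c := by rw [ha, hc]; exact hexp _ _ _ (by ring)
  have hbb : b * b = d := by rw [hb, hd]; exact hexp _ _ _ (by ring)
  -- half-modular relations
  have hLR : R⁻¹ * L * R = d • L := by
    rw [Matrix.mul_assoc]
    have hLRe : L * R = d • (R * L) := by
      rw [hhalf, smul_smul, hdc, one_smul]
    rw [hLRe, Matrix.mul_smul, ← Matrix.mul_assoc, Matrix.nonsing_inv_mul R hRdet,
      Matrix.one_mul]
  have hhalfH : Lᴴ * R = c • (R * Lᴴ) := by
    have h1 := congrArg conjTranspose hhalf
    rw [conjTranspose_mul, conjTranspose_smul, conjTranspose_mul, hR.1.eq] at h1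
    rwa [show star c = c by rw [hc]; exact Complex.conj_ofReal _] at h1
  have hLHR : R⁻¹ * Lᴴ * R = c • Lᴴ := by
    rw [Matrix.mul_assoc, hhalfH, Matrix.mul_smul, ← Matrix.mul_assoc,
      Matrix.nonsing_inv_mul R hRdet, Matrix.one_mul]
  -- conjTranspose closed forms
  have hc1 : L1ᴴ = a • Lᴴ + b • L := by
    rw [hL1]
    simp only [conjTranspose_add, conjTranspose_smul, conjTranspose_conjTranspose, hsa, hsb]
  have hc2 : L2ᴴ = (-Complex.I) • (-(a • Lᴴ) + b • L) := by
    rw [hL2]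
    simp only [conjTranspose_smul, conjTranspose_add, conjTranspose_neg, conjTranspose_smul,
      conjTranspose_conjTranspose, hsa, hsb, Complex.star_def, Complex.conj_I, neg_smul]
  refine ⟨?_, ?_, ?_⟩
  · rw [hc1, hL1]
    simp only [Matrix.mul_add, Matrix.add_mul, Matrix.mul_smul, Matrix.smul_mul]
    rw [hLR, hLHR, smul_smul, smul_smul, hs1, hs2, add_comm]
  · rw [hc2, hL2]
    simp only [Matrix.mul_add, Matrix.add_mul, Matrix.mul_smul, Matrix.smul_mul,
      Matrix.mul_neg, Matrix.neg_mul, smul_neg, neg_smul]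
    rw [hLR, hLHR, smul_smul, smul_smul, hs1, hs2]
    module
  · intro X
    rw [hc1, hc2, hL1, hL2]
    have hI : (-Complex.I) * Complex.I = 1 := by
      rw [neg_mul, Complex.I_mul_I, neg_neg]
    have hE2 : ((-Complex.I) • (-(a • Lᴴ) + b • L)) * X *
        (Complex.I • (-(a • L) + b • Lᴴ))
        = (-(a • Lᴴ) + b • L) * X * (-(a • L) + b • Lᴴ) := by
      rw [Matrix.smul_mul, Matrix.smul_mul, Matrix.mul_smul, smul_smul, hI, one_smul]
    rw [hE2]
    have h2c : (2 : ℂ) * c = a * a + a * a := by rw [← haa]; ring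
    have h2d : (2 : ℂ) * d = b * b + b * b := by rw [← hbb]; ring
    rw [h2c, h2d]
    simp only [Matrix.add_mul, Matrix.mul_add, Matrix.smul_mul, Matrix.mul_smul,
      Matrix.neg_mul, Matrix.mul_neg, smul_smul, smul_neg, neg_smul, neg_neg, add_smul]
    module
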